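/- Let ω be a bounded open set and f ∈ L^∞(ω). Then the signed Schwarz symmetrization f* (defined via the generalized inverse of the distribution function of f, allowing negative values) and the Talenti symmetrization f† (defined by f†(s) = (f⁺)*(s) − (f⁻)*(|ω|−s)) coincide almost everywhere on [0,|ω|). -/

import Mathlib

open MeasureTheory Set
open scoped ENNReal NNReal

lemma aux_inf_nonneg (P : ℝ → Prop) (hup : ∀ a b, P a → a ≤ b → P b)
    (hne : {t | P t}.Nonempty) (hbd : BddBelow {t | P t}) :
    sInf {t | 0 ≤ t ∧ P t} = max (sInf {t | P t}) 0 := by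
  rcases le_or_gt 0 (sInf {t | P t}) with h | h
  · have hset : {t | 0 ≤ t ∧ P t} = {t | P t} := by
      ext t
      exact ⟨fun ht => ht.2, fun ht => ⟨le_trans h (csInf_le hbd ht), ht⟩⟩
    rw [hset, max_eq_left h]
  · obtain ⟨t, htP, htlt⟩ := exists_lt_of_csInf_lt hne h
    have hset : {t | 0 ≤ t ∧ P t} = Ici 0 := by
      ext x
      exact ⟨fun hx => hx.1, fun hx => ⟨hx, hup t x htP (le_trans htlt.le hx)⟩⟩
    rw [hset, csInf_Ici, max_eq_right h.le]

lemma aux_inf_eq_sup (F : ℝ → ℝ) (s : ℝ) (hF : Antitone F)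
    (hne : {t | F t < s}.Nonempty) (hbd : BddBelow {t | F t < s})
    (hne' : {t | s ≤ F t}.Nonempty) :
    sInf {t | F t < s} = sSup {t | s ≤ F t} := by
  have hbd' : BddAbove {t | s ≤ F t} := by
    obtain ⟨t0, ht0⟩ := hne
    refine ⟨t0, fun t ht => ?_⟩
    by_contra hlt
    push_neg at hlt
    exact absurd (le_trans ht (hF hlt.le)) (not_le.mpr ht0)
  apply le_antisymm
  · by_contra hlt
    push_neg at hlt
    obtain ⟨c, hc1, hc2⟩ := exists_between hlt
    have hc3 : c ∉ {t | F t < s} := fun hc => absurd (csInf_le hbd hc) (not_le.mpr hc2)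
    have hc4 : s ≤ F c := not_lt.mp hc3
    exact absurd (le_csSup hbd' hc4) (not_le.mpr hc1)
  · refine csSup_le hne' fun t ht => le_csInf hne fun t' ht' => ?_
    by_contra hlt
    push_neg at hlt
    exact absurd (le_trans ht (hF hlt.le)) (not_le.mpr ht')



/-- The (signed) decreasing rearrangement of `g` on `ω`: the generalized
inverse `s ↦ inf {t : |{x ∈ ω : g x > t}| < s}` of the distribution function. -/
noncomputable def decRearr {α : Type*} [MeasurableSpace α] (μ : Measure α)
    (ω : Set α) (g : α → ℝ) (s : ℝ) : ℝ :=
  sInf {t : ℝ | (μ {x | x ∈ ω ∧ t < g x}).toReal < s}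

/-- Talenti's rearrangement `f†(s) = (f⁺)*(s) − (f⁻)*(|ω| − s)`. -/
noncomputable def talenti {α : Type*} [MeasurableSpace α] (μ : Measure α)
    (ω : Set α) (f : α → ℝ) (s : ℝ) : ℝ :=
  decRearr μ ω (fun x => max (f x) 0) s
    - decRearr μ ω (fun x => max (-f x) 0) ((μ ω).toReal - s)

/-- For a bounded open set `ω` and `f ∈ L^∞(ω)`, the signed Schwarz
symmetrization `f*` (signed decreasing rearrangement) and Talenti's
symmetrization `f†` coincide almost everywhere on `[0, |ω|)`. -/
theorem stmt_6 (d : ℕ) (ω : Set (EuclideanSpace ℝ (Fin d)))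
    (hωo : IsOpen ω) (hωb : Bornology.IsBounded ω)
    (f : EuclideanSpace ℝ (Fin d) → ℝ) (hf : Measurable f)
    (hfb : MemLp f ⊤ (volume.restrict ω)) :
    ∀ᵐ s ∂(volume.restrict (Set.Ico (0 : ℝ) (volume ω).toReal)),
      decRearr volume ω f s = talenti volume ω f s := by
  classical
  set μ : Measure (EuclideanSpace ℝ (Fin d)) := volume with hμ
  have hω : MeasurableSet ω := hωo.measurableSet
  have hμωlt : μ ω < ⊤ := hωb.measure_lt_top
  have hμω : μ ω ≠ ⊤ := hμωlt.ne
  set V : ℝ := (μ ω).toReal with hV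
  -- essential bound
  set M : ℝ := (eLpNorm f ⊤ (μ.restrict ω)).toReal with hM
  have hMtop : eLpNorm f ⊤ (μ.restrict ω) ≠ ⊤ := hfb.2.ne
  have hae : ∀ᵐ x ∂(μ.restrict ω), |f x| ≤ M := by
    have h1 : ∀ᵐ x ∂(μ.restrict ω), (‖f x‖₊ : ℝ≥0∞) ≤ eLpNormEssSup f (μ.restrict ω) :=
      ae_le_eLpNormEssSup
    filter_upwards [h1] with x hx
    have := ENNReal.toReal_mono (by rwa [eLpNorm_exponent_top] at hMtop) hx
    simpa [hM, eLpNorm_exponent_top, Real.norm_eq_abs] using this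
  have hbad : μ ({x | ¬ |f x| ≤ M} ∩ ω) = 0 := by
    have := ae_iff.mp hae
    rwa [Measure.restrict_apply' hω] at this
  -- distribution functions
  set F : ℝ → ℝ := fun t => (μ {x | x ∈ ω ∧ t < f x}).toReal with hFdef
  set H : ℝ → ℝ := fun t => (μ {x | x ∈ ω ∧ t ≤ f x}).toReal with hHdef
  have hsubω : ∀ (P : EuclideanSpace ℝ (Fin d) → Prop),
      {x | x ∈ ω ∧ P x} ⊆ ω := fun P x hx => hx.1
  have hfin : ∀ (P : EuclideanSpace ℝ (Fin d) → Prop),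
      μ {x | x ∈ ω ∧ P x} ≠ ⊤ :=
    fun P => (lt_of_le_of_lt (measure_mono (hsubω P)) hμωlt).ne
  have hFanti : Antitone F := by
    intro a b hab
    exact ENNReal.toReal_mono (hfin _)
      (measure_mono fun x hx => ⟨hx.1, lt_of_le_of_lt hab hx.2⟩)
  have hHanti : Antitone H := by
    intro a b hab
    exact ENNReal.toReal_mono (hfin _)
      (measure_mono fun x hx => ⟨hx.1, le_trans hab hx.2⟩)
  have hFH : ∀ t, F t ≤ H t := fun t =>
    ENNReal.toReal_mono (hfin _) (measure_mono fun x hx => ⟨hx.1, hx.2.le⟩)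
  have hHF : ∀ t t', t' < t → H t ≤ F t' := fun t t' h =>
    ENNReal.toReal_mono (hfin _) (measure_mono fun x hx => ⟨hx.1, lt_of_lt_of_le h hx.2⟩)
  have hFtop : ∀ t, M < t → F t = 0 := by
    intro t ht
    have : μ {x | x ∈ ω ∧ t < f x} = 0 := by
      refine measure_mono_null (fun x hx => ?_) hbad
      refine ⟨fun habs => ?_, hx.1⟩
      have : M < f x := lt_of_lt_of_le ht hx.2.le
      nlinarith [abs_le.mp habs]
    simp [hFdef, this]
  have hHtop : ∀ t, M < t → H t = 0 := by
    intro t ht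
    have : μ {x | x ∈ ω ∧ t ≤ f x} = 0 := by
      refine measure_mono_null (fun x hx => ?_) hbad
      refine ⟨fun habs => ?_, hx.1⟩
      have : M < f x := lt_of_lt_of_le ht hx.2
      nlinarith [abs_le.mp habs]
    simp [hHdef, this]
  have hHbot : ∀ t, t < -M → H t = V := by
    intro t ht
    have hsub : ω \ ({x | ¬ |f x| ≤ M} ∩ ω) ⊆ {x | x ∈ ω ∧ t ≤ f x} := by
      intro x hx
      refine ⟨hx.1, ?_⟩
      have hx2 : |f x| ≤ M := by
        by_contra habs
        exact hx.2 ⟨habs, hx.1⟩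
      nlinarith [abs_le.mp hx2]
    have h1 : μ ω ≤ μ {x | x ∈ ω ∧ t ≤ f x} := by
      calc μ ω = μ (ω \ ({x | ¬ |f x| ≤ M} ∩ ω)) := (measure_diff_null hbad).symm
        _ ≤ _ := measure_mono hsub
    have h2 : μ {x | x ∈ ω ∧ t ≤ f x} = μ ω :=
      le_antisymm (measure_mono (hsubω _)) h1
    simp [hHdef, h2, hV]
  have hFbot : ∀ t, t < -M → F t = V := by
    intro t ht
    have hsub : ω \ ({x | ¬ |f x| ≤ M} ∩ ω) ⊆ {x | x ∈ ω ∧ t < f x} := by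
      intro x hx
      refine ⟨hx.1, ?_⟩
      have hx2 : |f x| ≤ M := by
        by_contra habs
        exact hx.2 ⟨habs, hx.1⟩
      nlinarith [abs_le.mp hx2]
    have h1 : μ ω ≤ μ {x | x ∈ ω ∧ t < f x} := by
      calc μ ω = μ (ω \ ({x | ¬ |f x| ≤ M} ∩ ω)) := (measure_diff_null hbad).symm
        _ ≤ _ := measure_mono hsub
    have h2 : μ {x | x ∈ ω ∧ t < f x} = μ ω :=
      le_antisymm (measure_mono (hsubω _)) h1
    simp [hFdef, h2, hV]
  have hMnn : 0 ≤ M := ENNReal.toReal_nonneg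
  -- complement identity : μ {f < c on ω} = μ ω - μ {c ≤ f on ω}
  have hcompl : ∀ c : ℝ, (μ {x | x ∈ ω ∧ f x < c}).toReal = V - H c := by
    intro c
    have hmeas : MeasurableSet {x | x ∈ ω ∧ c ≤ f x} := by
      have : {x | x ∈ ω ∧ c ≤ f x} = ω ∩ f ⁻¹' (Ici c) := rfl
      rw [this]; exact hω.inter (hf measurableSet_Ici)
    have hseteq : {x | x ∈ ω ∧ f x < c} = ω \ {x | x ∈ ω ∧ c ≤ f x} := by
      ext x
      simp only [mem_setOf_eq, mem_diff, not_and, not_le]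
      constructor
      · rintro ⟨h1, h2⟩; exact ⟨h1, fun _ => h2⟩
      · rintro ⟨h1, h2⟩; exact ⟨h1, h2 h1⟩
    rw [hseteq, measure_diff (fun x hx => hx.1) hmeas.nullMeasurableSet (hfin _),
      ENNReal.toReal_sub_of_le (measure_mono (hsubω _)) hμω]
  -- the sup functions
  set B : ℝ → ℝ := fun s => sSup {t | s ≤ F t} with hBdef
  set A : ℝ → ℝ := fun s => sSup {t | s < H t} with hAdef
  -- bad set is countable
  set C : Set ℝ := {s | s ∈ Ioo 0 V ∧ A s < B s} with hCdef
  have hCsub : C ⊆ Set.range (fun q : ℚ => F q) := by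
    rintro s ⟨⟨hs0, hsV⟩, hAB⟩
    obtain ⟨q, hq1, hq2⟩ := exists_rat_btwn hAB
    refine ⟨q, ?_⟩
    have hbddH : BddAbove {t | s < H t} := by
      refine ⟨M, fun t ht => ?_⟩
      by_contra hlt
      push_neg at hlt
      have ht' : s < H t := ht
      rw [hHtop t hlt] at ht'
      exact absurd ht' (not_lt.mpr hs0.le)
    have hneF : {t : ℝ | s ≤ F t}.Nonempty := by
      refine ⟨-(M+1), ?_⟩
      show s ≤ F (-(M+1))
      rw [hFbot (-(M+1)) (by linarith)]
      exact hsV.le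
    -- F q ≥ s from q < B s
    have h1 : s ≤ F q := by
      obtain ⟨t, ht, hqt⟩ := exists_lt_of_lt_csSup hneF hq2
      exact le_trans ht (hFanti hqt.le)
    -- F q ≤ s from A s < q
    have h2 : F q ≤ s := by
      have : ¬ s < H q := fun hc => absurd (le_csSup hbddH hc) (not_le.mpr hq1)
      exact le_trans (hFH _) (not_lt.mp this)
    exact le_antisymm h2 h1
  have hCcount : C.Countable := (Set.countable_range _).mono hCsub
  -- null sets
  have hnull : (volume.restrict (Set.Ico (0 : ℝ) V)) ({0} ∪ C) = 0 := by
    have h0 : (volume : Measure ℝ) ({0} ∪ C) = 0 :=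
      Set.Countable.measure_zero ((Set.countable_singleton 0).union hCcount) _
    exact le_antisymm (le_trans (Measure.le_iff'.mp Measure.restrict_le_self _) h0.le)
      (zero_le)
  have hmem : ∀ᵐ s ∂(volume.restrict (Set.Ico (0 : ℝ) V)), s ∈ Set.Ico (0 : ℝ) V :=
    ae_restrict_mem measurableSet_Ico
  have hnmem : ∀ᵐ s ∂(volume.restrict (Set.Ico (0 : ℝ) V)), s ∉ ({0} ∪ C : Set ℝ) := by
    rw [ae_iff]
    have hseteq : {a : ℝ | ¬ a ∉ ({0} ∪ C : Set ℝ)} = ({0} ∪ C : Set ℝ) := by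
      ext a; simp only [mem_setOf_eq, not_not]
    rw [hseteq]
    exact hnull
  filter_upwards [hmem, hnmem] with s hs hsn
  have hs0 : 0 < s := lt_of_le_of_ne hs.1 (fun h => hsn (Or.inl h.symm))
  have hsV : s < V := hs.2
  have hsC : ¬ (A s < B s) := fun h => hsn (Or.inr ⟨⟨hs0, hsV⟩, h⟩)
  -- nonemptiness / boundedness facts for this s
  have hneFlt : {t | F t < s}.Nonempty := by
    refine ⟨M + 1, ?_⟩
    show F (M+1) < s
    rw [hFtop (M+1) (by linarith)]
    exact hs0
  have hbdFlt : BddBelow {t | F t < s} := by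
    refine ⟨-(M+1), fun t ht => ?_⟩
    by_contra hlt
    push_neg at hlt
    have ht' : F t < s := ht
    rw [hFbot t (by linarith)] at ht'
    exact absurd ht' (not_lt.mpr hsV.le)
  have hneFge : {t : ℝ | s ≤ F t}.Nonempty := by
    refine ⟨-(M+1), ?_⟩
    show s ≤ F (-(M+1))
    rw [hFbot (-(M+1)) (by linarith)]
    exact hsV.le
  have hneHgt : {t : ℝ | s < H t}.Nonempty := by
    refine ⟨-(M+1), ?_⟩
    show s < H (-(M+1))
    rw [hHbot (-(M+1)) (by linarith)]
    exact hsV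
  have hbddH : BddAbove {t | s < H t} := by
    refine ⟨M, fun t ht => ?_⟩
    by_contra hlt
    push_neg at hlt
    have ht' : s < H t := ht
    rw [hHtop t hlt] at ht'
    exact absurd ht' (not_lt.mpr hs0.le)
  -- A s ≤ B s always; with ¬(A<B) conclude equality
  have hbdB : BddAbove {t : ℝ | s ≤ F t} := by
    refine ⟨M, fun t ht => ?_⟩
    by_contra hlt
    push_neg at hlt
    have ht' : s ≤ F t := ht
    rw [hFtop t hlt] at ht'
    exact absurd ht' (not_le.mpr hs0)
  have hALEB : A s ≤ B s := by
    refine csSup_le hneHgt fun t ht => ?_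
    refine le_of_forall_lt fun c hc => ?_
    obtain ⟨c', hc1, hc2⟩ := exists_between hc
    have : s ≤ F c' := le_trans ht.le (hHF t c' hc2)
    exact lt_of_lt_of_le hc1 (le_csSup hbdB this)
  have hAB : A s = B s := le_antisymm hALEB (not_lt.mp hsC)
  -- Step 0 : decRearr f s = B s
  have hstep0 : decRearr μ ω f s = B s := by
    rw [decRearr]
    exact aux_inf_eq_sup F s hFanti hneFlt hbdFlt hneFge
  -- Step A : decRearr f⁺ s = max (B s) 0
  have hsetplus : {t : ℝ | (μ {x | x ∈ ω ∧ t < max (f x) 0}).toReal < s}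
      = {t | 0 ≤ t ∧ F t < s} := by
    ext t
    simp only [mem_setOf_eq]
    rcases le_or_gt 0 t with h0 | h0
    · have : {x | x ∈ ω ∧ t < max (f x) 0} = {x | x ∈ ω ∧ t < f x} := by
        ext x
        simp only [mem_setOf_eq, lt_max_iff]
        constructor
        · rintro ⟨h1, h2 | h2⟩
          · exact ⟨h1, h2⟩
          · exact absurd h2 (not_lt.mpr h0)
        · rintro ⟨h1, h2⟩; exact ⟨h1, Or.inl h2⟩
      rw [this]
      exact ⟨fun h => ⟨h0, h⟩, fun h => h.2⟩
    · have : {x | x ∈ ω ∧ t < max (f x) 0} = ω := by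
        ext x
        simp only [mem_setOf_eq, lt_max_iff]
        exact ⟨fun h => h.1, fun h => ⟨h, Or.inr h0⟩⟩
      rw [this]
      constructor
      · intro h; exact absurd h (not_lt.mpr hsV.le)
      · intro h; exact absurd h.1 (not_le.mpr h0)
  have hstepA : decRearr μ ω (fun x => max (f x) 0) s = max (B s) 0 := by
    have h1 : sInf {t | 0 ≤ t ∧ F t < s} = max (sInf {t | F t < s}) 0 :=
      aux_inf_nonneg (fun t => F t < s)
        (fun a b ha hab => lt_of_le_of_lt (hFanti hab) ha) hneFlt hbdFlt
    rw [aux_inf_eq_sup F s hFanti hneFlt hbdFlt hneFge] at h1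
    rw [decRearr, hsetplus]
    exact h1
  -- Step B : decRearr f⁻ (V - s) = max (- A s) 0
  have hsetminus : {t : ℝ | (μ {x | x ∈ ω ∧ t < max (-f x) 0}).toReal < V - s}
      = {t | 0 ≤ t ∧ s < H (-t)} := by
    ext t
    simp only [mem_setOf_eq]
    rcases le_or_gt 0 t with h0 | h0
    · have heq : {x | x ∈ ω ∧ t < max (-f x) 0} = {x | x ∈ ω ∧ f x < -t} := by
        ext x
        simp only [mem_setOf_eq, lt_max_iff]
        constructor
        · rintro ⟨h1, h2 | h2⟩
          · exact ⟨h1, by linarith⟩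
          · exact absurd h2 (not_lt.mpr h0)
        · rintro ⟨h1, h2⟩; exact ⟨h1, Or.inl (by linarith)⟩
      rw [heq, hcompl (-t)]
      constructor
      · intro h; exact ⟨h0, by linarith⟩
      · rintro ⟨_, h⟩; linarith
    · have heq : {x | x ∈ ω ∧ t < max (-f x) 0} = ω := by
        ext x
        simp only [mem_setOf_eq, lt_max_iff]
        exact ⟨fun h => h.1, fun h => ⟨h, Or.inr h0⟩⟩
      rw [heq]
      constructor
      · intro h
        exfalso
        have : (μ ω).toReal = V := rfl
        rw [this] at h
        linarith
      · intro h; exact absurd h.1 (not_le.mpr h0)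
  have hreflect : {t : ℝ | s < H (-t)} = -{t : ℝ | s < H t} := by
    ext t; simp [Set.mem_neg]
  have hstepB : decRearr μ ω (fun x => max (-f x) 0) (V - s) = max (- A s) 0 := by
    have hneH' : {t : ℝ | s < H (-t)}.Nonempty := by
      refine ⟨M + 1, ?_⟩
      show s < H (-(M+1))
      rw [hHbot (-(M+1)) (by linarith)]
      exact hsV
    have hbdH' : BddBelow {t : ℝ | s < H (-t)} := by
      refine ⟨-M, fun t ht => ?_⟩
      by_contra hlt
      push_neg at hlt
      have ht' : s < H (-t) := ht
      rw [hHtop (-t) (by linarith)] at ht'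
      exact absurd ht' (not_lt.mpr hs0.le)
    have h1 : sInf {t | 0 ≤ t ∧ s < H (-t)} = max (sInf {t | s < H (-t)}) 0 :=
      aux_inf_nonneg (fun t => s < H (-t))
        (fun a b ha hab => lt_of_lt_of_le ha (hHanti (neg_le_neg hab))) hneH' hbdH'
    have h2 : sInf {t : ℝ | s < H (-t)} = - A s := by
      rw [hreflect, Real.sInf_def, neg_neg]
    rw [h2] at h1
    rw [decRearr, hsetminus]
    exact h1
  -- conclude
  rw [hstep0, talenti, hstepA]
  have : decRearr μ ω (fun x => max (-f x) 0) ((μ ω).toReal - s) = max (- A s) 0 := hstepB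
  rw [this, hAB]
  have := max_zero_sub_max_neg_zero_eq_self (B s)
  linarith
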